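/- Let a₀ ∈ M_+(n,m) and u ∈ M(n,m) with L₀ = u a₀^+, δ₀ = tr(L₀^T L₀), τ₀ = tr(L₀). Define f(t) = (m δ₀/4) t² + τ₀ t + 1, s(t) = ∫₀ᵗ dσ/f(σ), ω₀ = L₀^T − L₀, and P₀ = (a₀^T a₀)^{-1} u^T a₀ − (τ₀/m) I_m. Then the curve a(t) = f(t)^{1/m} exp(−s(t) ω₀) a₀ exp(s(t) P₀) satisfies the geodesic equation a'' = a'(a^Ta)^{-1}(a')^T a + a'(a^Ta)^{-1}a^T a' − a(a^Ta)^{-1}(a')^T a' + (1/2) tr(a'(a^Ta)^{-1}(a')^T) a − tr(a'(a^Ta)^{-1}a^T) a', with a(0) = a₀ and a'(0) = u. -/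

import Mathlib

open Matrix

attribute [local instance] Matrix.frobeniusNormedAddCommGroup Matrix.frobeniusNormedSpace

noncomputable section

/-- Moore-Penrose pseudoinverse of a full-rank `n × m` matrix. -/
def aplus {n m : ℕ} (a : Matrix (Fin n) (Fin m) ℝ) : Matrix (Fin m) (Fin n) ℝ :=
  (aᵀ * a)⁻¹ * aᵀ

/-- Right-hand side of the geodesic equation `a_tt = geoRHS (a, a_t)` of the
metric `⟨u,v⟩_a = tr(u (aᵀa)⁻¹ vᵀ)√det(aᵀa)` on full-rank `n × m` matrices. -/
def geoRHS {n m : ℕ} (x v : Matrix (Fin n) (Fin m) ℝ) : Matrix (Fin n) (Fin m) ℝ :=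
  v * (xᵀ * x)⁻¹ * vᵀ * x + v * (xᵀ * x)⁻¹ * xᵀ * v - x * (xᵀ * x)⁻¹ * vᵀ * v
    + ((1 / 2) * Matrix.trace (v * (xᵀ * x)⁻¹ * vᵀ)) • x
    - (Matrix.trace (v * (xᵀ * x)⁻¹ * xᵀ)) • v

/- ### Auxiliary lemmas -/

lemma star_identity {n m : ℕ} (a0 u : Matrix (Fin n) (Fin m) ℝ)
    (M G0 P0 : Matrix (Fin m) (Fin m) ℝ) (w0 : Matrix (Fin n) (Fin n) ℝ)
    (hM : a0ᵀ * a0 = M) (hGM : G0 * M = 1)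
    (t0 d0 m' : ℝ)
    (ht0a : Matrix.trace (G0*(uᵀ*a0)) = t0) (ht0b : Matrix.trace (G0*(a0ᵀ*u)) = t0)
    (hd0tr : Matrix.trace (G0*(uᵀ*u)) = d0)
    (hP0 : P0 = G0 * uᵀ * a0 - (t0/m') • (1 : Matrix (Fin m) (Fin m) ℝ))
    (hw0 : w0 = a0 * G0 * uᵀ - u * G0 * a0ᵀ)
    (α μ lam αd μd : ℝ)
    (hm' : Matrix.trace (1 : Matrix (Fin m) (Fin m) ℝ) = m')
    (hu : lam*μ + μd - μ^2*t0/m' + μ*α = 2*α*μ - (α*m' + μ*t0)*μ)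
    (ha : lam*α + αd - μ*α*t0/m'
        = α^2 + (α^2*m' + 2*α*μ*t0 + μ^2*d0)/2 - (α*m'+μ*t0)*α)
    (Z Zd : Matrix (Fin n) (Fin m) ℝ) (hZ : Z = α•a0 + μ•u) (hZd : Zd = αd•a0 + μd•u) :
    lam•Z + Zd + μ•(Z*P0 - w0*Z)
      = Z*(G0*(Zᵀ*a0)) + Z*(G0*(a0ᵀ*Z)) - a0*(G0*(Zᵀ*Z))
        + ((1/2)*Matrix.trace (Z*(G0*Zᵀ)))•a0 - (Matrix.trace (Z*(G0*a0ᵀ)))•Z := by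
  have hGaa : G0*(a0ᵀ*a0) = 1 := by rw [hM, hGM]
  have htr1 : Matrix.trace (a0*(G0*a0ᵀ)) = m' := by
    rw [Matrix.trace_mul_comm, Matrix.mul_assoc, hGaa, hm']
  have htr2 : Matrix.trace (a0*(G0*uᵀ)) = t0 := by
    rw [Matrix.trace_mul_comm, Matrix.mul_assoc, ht0a]
  have htr3 : Matrix.trace (u*(G0*a0ᵀ)) = t0 := by
    rw [Matrix.trace_mul_comm, Matrix.mul_assoc, ht0b]
  have htr4 : Matrix.trace (u*(G0*uᵀ)) = d0 := by
    rw [Matrix.trace_mul_comm, Matrix.mul_assoc, hd0tr]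
  have hε : Matrix.trace (Z*(G0*Zᵀ)) = α^2*m' + 2*α*μ*t0 + μ^2*d0 := by
    subst hZ
    simp only [transpose_add, transpose_smul, Matrix.mul_add, Matrix.add_mul,
      Matrix.smul_mul, Matrix.mul_smul, Matrix.trace_add, Matrix.trace_smul,
      smul_smul, smul_add]
    rw [htr1, htr2, htr3, htr4]
    ring_nf
  have hη : Matrix.trace (Z*(G0*a0ᵀ)) = α*m' + μ*t0 := by
    subst hZ
    simp only [Matrix.add_mul, Matrix.smul_mul, Matrix.trace_add, Matrix.trace_smul]
    rw [htr1, htr3]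
    simp [smul_eq_mul]
  rw [hε, hη]
  subst hZ hZd hP0 hw0
  simp only [transpose_add, transpose_smul, Matrix.mul_add, Matrix.add_mul,
    Matrix.mul_sub, Matrix.sub_mul, Matrix.smul_mul, Matrix.mul_smul, Matrix.mul_one,
    Matrix.mul_assoc, smul_add, smul_sub, smul_smul, hGaa]
  match_scalars
  all_goals try ring
  all_goals try linear_combination ha
  all_goals linear_combination hu


lemma geo_reduce {n m : ℕ} (a0 Z Wm : Matrix (Fin n) (Fin m) ℝ)
    (O : Matrix (Fin n) (Fin n) ℝ) (Q Qi M G0 : Matrix (Fin m) (Fin m) ℝ)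
    (c : ℝ) (hc : c ≠ 0)
    (hM : a0ᵀ * a0 = M) (hGM : G0 * M = 1) (hMG : M * G0 = 1)
    (hOO : Oᵀ * O = 1) (hQQi : Q * Qi = 1) (hQiQ : Qi * Q = 1)
    (hstar : Wm = Z*(G0*(Zᵀ*a0)) + Z*(G0*(a0ᵀ*Z)) - a0*(G0*(Zᵀ*Z))
        + ((1/2)*Matrix.trace (Z*(G0*Zᵀ)))•a0 - (Matrix.trace (Z*(G0*a0ᵀ)))•Z) :
    geoRHS (c•(O*a0*Q)) (c•(O*Z*Q)) = c•(O*Wm*Q) := by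
  have hOO' : ∀ (k : ℕ) (X : Matrix (Fin n) (Fin k) ℝ), Oᵀ*(O*X) = X := fun k X => by
    rw [← Matrix.mul_assoc, hOO, Matrix.one_mul]
  have hM' : ∀ (k : ℕ) (X : Matrix (Fin m) (Fin k) ℝ), a0ᵀ*(a0*X) = M*X := fun k X => by
    rw [← Matrix.mul_assoc, hM]
  have hGM' : ∀ (k : ℕ) (X : Matrix (Fin m) (Fin k) ℝ), G0*(M*X) = X := fun k X => by
    rw [← Matrix.mul_assoc, hGM, Matrix.one_mul]
  have hQitQt : Qiᵀ * Qᵀ = 1 := by rw [← transpose_mul, hQQi, transpose_one]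
  have hQitQt' : ∀ (k : ℕ) (X : Matrix (Fin m) (Fin k) ℝ), Qiᵀ*(Qᵀ*X) = X := fun k X => by
    rw [← Matrix.mul_assoc, hQitQt, Matrix.one_mul]
  have hQQi' : ∀ (k : ℕ) (X : Matrix (Fin m) (Fin k) ℝ), Q*(Qi*X) = X := fun k X => by
    rw [← Matrix.mul_assoc, hQQi, Matrix.one_mul]
  have hcc : (c*c) ≠ 0 := mul_ne_zero hc hc
  have h1 : (c•(O*a0*Q))ᵀ*(c•(O*a0*Q)) = (c*c)•(Qᵀ*(M*(Q))) := by
    simp only [transpose_smul, transpose_mul, Matrix.smul_mul, Matrix.mul_smul, smul_smul,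
      Matrix.mul_assoc, hOO', hM']
  have h2 : ((c•(O*a0*Q))ᵀ*(c•(O*a0*Q)))⁻¹ = ((c*c)⁻¹)•(Qi*(G0*Qiᵀ)) := by
    apply Matrix.inv_eq_left_inv
    rw [h1]
    simp only [Matrix.smul_mul, Matrix.mul_smul, smul_smul, Matrix.mul_assoc,
      hQitQt', hGM', hQiQ]
    rw [mul_inv_cancel₀ hcc, one_smul]
  have sandwich : ∀ X Y W : Matrix (Fin n) (Fin m) ℝ,
      (c•(O*X*Q)) * (((c*c)⁻¹)•(Qi*(G0*Qiᵀ))) * (c•(O*Y*Q))ᵀ * (c•(O*W*Q))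
        = c•(O*(X*(G0*(Yᵀ*W)))*Q) := by
    intro X Y W
    simp only [transpose_smul, transpose_mul, Matrix.smul_mul, Matrix.mul_smul, smul_smul,
      Matrix.mul_assoc, hQQi', hQitQt', hOO']
    match_scalars
    field_simp
  have htrO : ∀ X : Matrix (Fin n) (Fin n) ℝ, Matrix.trace (O*(X*Oᵀ)) = Matrix.trace X := by
    intro X
    rw [← Matrix.mul_assoc, Matrix.trace_mul_comm, ← Matrix.mul_assoc, hOO, Matrix.one_mul]
  have tsand : ∀ X Y : Matrix (Fin n) (Fin m) ℝ,
      Matrix.trace ((c•(O*X*Q)) * (((c*c)⁻¹)•(Qi*(G0*Qiᵀ))) * (c•(O*Y*Q))ᵀ)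
        = Matrix.trace (X*(G0*Yᵀ)) := by
    intro X Y
    simp only [transpose_smul, transpose_mul, Matrix.smul_mul, Matrix.mul_smul, smul_smul,
      Matrix.mul_assoc, hQQi', hQitQt', Matrix.trace_smul]
    rw [show X*(G0*(Yᵀ*Oᵀ)) = (X*(G0*Yᵀ))*Oᵀ by simp [Matrix.mul_assoc], htrO]
    rw [show c * ((c*c)⁻¹ * c) = 1 by field_simp]
    rw [one_smul]
  unfold geoRHS
  rw [h2, sandwich Z Z a0, sandwich Z a0 Z, sandwich a0 Z Z, tsand Z Z, tsand Z a0, hstar]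
  simp only [Matrix.mul_add, Matrix.mul_sub, Matrix.add_mul, Matrix.sub_mul, smul_add, smul_sub,
    Matrix.mul_smul, Matrix.smul_mul, smul_smul]
  match_scalars <;> ring

lemma isBBM_mul {p q r : ℕ} : IsBoundedBilinearMap ℝ
    (fun z : Matrix (Fin p) (Fin q) ℝ × Matrix (Fin q) (Fin r) ℝ => z.1 * z.2) where
  add_left := fun a b c => Matrix.add_mul a b c
  smul_left := fun c a b => Matrix.smul_mul c a b
  add_right := fun a b c => Matrix.mul_add a b c
  smul_right := fun c a b => Matrix.mul_smul a c b
  bound := ⟨1, one_pos, fun a b => by simpa using Matrix.frobenius_norm_mul a b⟩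

lemma HasDerivAt.matMul {p q r : ℕ} {f : ℝ → Matrix (Fin p) (Fin q) ℝ}
    {g : ℝ → Matrix (Fin q) (Fin r) ℝ} {f' g'} {t : ℝ}
    (hf : HasDerivAt f f' t) (hg : HasDerivAt g g' t) :
    HasDerivAt (fun t => f t * g t) (f' * g t + f t * g') t := by
  have h := (isBBM_mul.hasFDerivAt (f t, g t)).comp t
    (HasFDerivAt.prodMk (hf.hasFDerivAt) (hg.hasFDerivAt))
  have h2 := h.hasDerivAt
  exact h2.congr_deriv (by
    change f t * ((1:ℝ) • g') + ((1:ℝ) • f') * g t = _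
    rw [one_smul, one_smul, add_comm])

lemma sq_rank_isUnit {p : ℕ} (a : Matrix (Fin p) (Fin p) ℝ) (h : a.rank = p) :
    IsUnit a.det := by
  rw [← Matrix.isUnit_iff_isUnit_det]
  rw [← Matrix.mulVec_surjective_iff_isUnit]
  have : LinearMap.range a.mulVecLin = ⊤ := by
    apply Submodule.eq_top_of_finrank_eq
    rw [← Matrix.rank, h]
    simp [Module.finrank_pi]
  intro v
  obtain ⟨w, hw⟩ := LinearMap.range_eq_top.mp this v
  exact ⟨w, hw⟩

section ExpFacts
attribute [local instance] Matrix.frobeniusNormedRing Matrix.frobeniusNormedAlgebra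
variable {p : ℕ} (X : Matrix (Fin p) (Fin p) ℝ)

lemma exp_smul_add (a b : ℝ) :
    NormedSpace.exp (a • X) * NormedSpace.exp (b • X) = NormedSpace.exp ((a+b) • X) := by
  rw [← Matrix.exp_add_of_commute _ _ (((Commute.refl X).smul_left a).smul_right b), add_smul]

lemma exp_smul_inv (a : ℝ) :
    NormedSpace.exp (a • X) * NormedSpace.exp ((-a) • X) = 1 := by
  rw [exp_smul_add, add_neg_cancel, zero_smul, NormedSpace.exp_zero]

lemma exp_smul_comm' (a : ℝ) :
    X * NormedSpace.exp (a • X) = NormedSpace.exp (a • X) * X :=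
  ((((Commute.refl X).smul_right a).exp_right)).eq

lemma exp_smul_deriv (g : ℝ → ℝ) {g' t : ℝ} (hg : HasDerivAt g g' t) :
    HasDerivAt (fun τ => NormedSpace.exp (g τ • X))
      (g' • (X * NormedSpace.exp (g t • X))) t := by
  have h := (hasDerivAt_exp_smul_const' (𝕂 := ℝ) X (g t)).scomp t hg
  exact h

lemma exp_smul_transpose (a : ℝ) :
    (NormedSpace.exp (a • X))ᵀ = NormedSpace.exp (a • Xᵀ) := by
  rw [← Matrix.exp_transpose, transpose_smul]
end ExpFacts

-- derivative of s at a point where f>0 on uIcc 0 t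
lemma sderiv (f : ℝ → ℝ) (hfc : Continuous f) (t : ℝ)
    (hpos : ∀ σ ∈ Set.uIcc (0:ℝ) t, 0 < f σ)
    (s : ℝ → ℝ) (hs : ∀ τ, s τ = ∫ σ in (0:ℝ)..τ, (f σ)⁻¹) :
    HasDerivAt s (f t)⁻¹ t := by
  have hne : f t ≠ 0 := (hpos t (Set.right_mem_uIcc)).ne'
  have hint : IntervalIntegrable (fun σ => (f σ)⁻¹) MeasureTheory.volume 0 t :=
    ContinuousOn.intervalIntegrable (hfc.continuousOn.inv₀ (fun x hx => (hpos x hx).ne'))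
  have hmeas : StronglyMeasurableAtFilter (fun σ => (f σ)⁻¹) (nhds t) MeasureTheory.volume :=
    (hfc.measurable.inv.stronglyMeasurable).stronglyMeasurableAtFilter
  have hca : ContinuousAt (fun σ => (f σ)⁻¹) t := (hfc.continuousAt).inv₀ hne
  rw [funext hs]
  exact intervalIntegral.integral_hasDerivAt_right hint hmeas hca

lemma pos_nbhd (f : ℝ → ℝ) (hfc : Continuous f) (t : ℝ)
    (hpos : ∀ σ ∈ Set.uIcc (0:ℝ) t, 0 < f σ) :
    ∃ δ > 0, ∀ τ ∈ Metric.ball t δ, ∀ σ ∈ Set.uIcc (0:ℝ) τ, 0 < f σ := by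
  have hK : IsCompact (Set.uIcc (0:ℝ) t) := isCompact_uIcc
  have hU : IsOpen {x | 0 < f x} := isOpen_lt continuous_const hfc
  obtain ⟨δ, hδ, hsub⟩ := hK.exists_thickening_subset_open hU (fun σ hσ => hpos σ hσ)
  refine ⟨δ, hδ, fun τ hτ σ hσ => ?_⟩
  rcases Set.uIcc_subset_uIcc_union_uIcc (a := (0:ℝ)) (b := t) (c := τ) hσ with h | h
  · exact hpos σ h
  · apply hsub
    rw [Metric.mem_thickening_iff]
    refine ⟨t, Set.right_mem_uIcc, lt_of_le_of_lt ?_ hτ⟩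
    calc dist σ t ≤ dist t τ := Real.dist_le_of_mem_uIcc h Set.left_mem_uIcc
    _ = dist τ t := dist_comm t τ


lemma scal_u (m' d0 t0 t F : ℝ) (hm0 : m' ≠ 0) (hF : F ≠ 0) :
    ((m'*d0/2*t + t0)/(m'*F))*F⁻¹ + (-(m'*d0/2*t + t0)/F^2) - (F⁻¹)^2*t0/m' + F⁻¹*(d0/2*t*F⁻¹)
      = 2*(d0/2*t*F⁻¹)*F⁻¹ - ((d0/2*t*F⁻¹)*m' + F⁻¹*t0)*F⁻¹ := by
  field_simp
  ring

lemma scal_a (m' d0 t0 t F : ℝ) (hm0 : m' ≠ 0) (hF : F ≠ 0)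
    (hrel : F = m'*d0/4*t^2 + t0*t + 1) :
    ((m'*d0/2*t + t0)/(m'*F))*(d0/2*t*F⁻¹) + (d0/2*F⁻¹ + d0/2*t*(-(m'*d0/2*t + t0)/F^2))
        - F⁻¹*(d0/2*t*F⁻¹)*t0/m'
      = (d0/2*t*F⁻¹)^2 + ((d0/2*t*F⁻¹)^2*m' + 2*(d0/2*t*F⁻¹)*F⁻¹*t0 + (F⁻¹)^2*d0)/2
        - ((d0/2*t*F⁻¹)*m' + F⁻¹*t0)*(d0/2*t*F⁻¹) := by
  field_simp
  linear_combination (4*m'*d0) * hrel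


set_option maxHeartbeats 1600000 in
lemma aux_main {n m : ℕ}
    (a0 u : Matrix (Fin n) (Fin m) ℝ) (M G0 P0 : Matrix (Fin m) (Fin m) ℝ)
    (w0 : Matrix (Fin n) (Fin n) ℝ)
    (m' d0 t0 : ℝ) (hm' : 0 < m')
    (hM : a0ᵀ * a0 = M) (hGM : G0 * M = 1) (hMG : M * G0 = 1) (hG0T : G0ᵀ = G0)
    (ht0a : Matrix.trace (G0*(uᵀ*a0)) = t0) (ht0b : Matrix.trace (G0*(a0ᵀ*u)) = t0)
    (hd0tr : Matrix.trace (G0*(uᵀ*u)) = d0)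
    (hmtr : Matrix.trace (1 : Matrix (Fin m) (Fin m) ℝ) = m')
    (hP0c : P0 = G0 * uᵀ * a0 - (t0/m') • (1 : Matrix (Fin m) (Fin m) ℝ))
    (hw0c : w0 = a0 * G0 * uᵀ - u * G0 * a0ᵀ)
    (f s : ℝ → ℝ)
    (hf : ∀ τ, f τ = m'*d0/4*τ^2 + t0*τ + 1)
    (hs : ∀ τ, s τ = ∫ σ in (0:ℝ)..τ, (f σ)⁻¹)
    (A V : ℝ → Matrix (Fin n) (Fin m) ℝ)
    (hA : ∀ τ, A τ = (f τ ^ ((1:ℝ)/m')) •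
        (NormedSpace.exp ((-(s τ)) • w0) * a0 * NormedSpace.exp ((s τ) • P0)))
    (hV : ∀ τ, V τ = (f τ ^ ((1:ℝ)/m')) •
        (NormedSpace.exp ((-(s τ)) • w0) *
          ((d0/2*τ*(f τ)⁻¹) • a0 + (f τ)⁻¹ • u) * NormedSpace.exp ((s τ) • P0)))
    (t : ℝ) (hpos : ∀ σ ∈ Set.uIcc (0:ℝ) t, 0 < f σ) :
    HasDerivAt A (V t) t ∧ HasDerivAt V (geoRHS (A t) (V t)) t := by
  have hm0 : m' ≠ 0 := hm'.ne'
  have hF : 0 < f t := hpos t Set.right_mem_uIcc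
  have hFne : f t ≠ 0 := hF.ne'
  have hfc : Continuous f := by rw [funext hf]; continuity
  have hfd : HasDerivAt f (m'*d0/2*t + t0) t := by
    rw [funext hf]
    have h := (((hasDerivAt_pow 2 t).const_mul (m'*d0/4)).add
      ((hasDerivAt_id t).const_mul t0)).add_const 1
    exact h.congr_deriv (by norm_num; ring)
  have hs' : HasDerivAt s (f t)⁻¹ t := sderiv f hfc t hpos s hs
  -- abbreviations
  set O := NormedSpace.exp ((-(s t)) • w0) with hOdef
  set Q := NormedSpace.exp ((s t) • P0) with hQdef
  set Qi := NormedSpace.exp ((-(s t)) • P0) with hQidef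
  set c := f t ^ ((1:ℝ)/m') with hcdef
  set μ := (f t)⁻¹ with hμdef
  set fd := m'*d0/2*t + t0 with hfddef
  set μd := -fd/(f t)^2 with hμddef
  set α := d0/2*t*(f t)⁻¹ with hαdef
  set αd := d0/2*μ + d0/2*t*μd with hαddef
  set lam := fd/(m'*(f t)) with hlamdef
  set Z := α•a0 + μ•u with hZdef
  set Zd := αd•a0 + μd•u with hZddef
  have hc0 : 0 < c := Real.rpow_pos_of_pos hF _
  have hcne : c ≠ 0 := hc0.ne'
  -- scalar identities
  have hcdl : (1/m') * f t ^ ((1:ℝ)/m' - 1) * fd = c * lam := by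
    rw [hcdef, hlamdef, Real.rpow_sub hF, Real.rpow_one]; field_simp; try ring
  have hsc1 : (1/m') * f t ^ ((1:ℝ)/m' - 1) * fd = c*α + c*μ*(t0/m') := by
    rw [hcdef, hαdef, hμdef, Real.rpow_sub hF, Real.rpow_one, hfddef]
    field_simp
    try ring
  have husc : lam*μ + μd - μ^2*t0/m' + μ*α = 2*α*μ - (α*m' + μ*t0)*μ := by
    rw [hlamdef, hμdef, hμddef, hαdef, hfddef]
    exact scal_u m' d0 t0 t (f t) hm0 hFne
  have hasc : lam*α + αd - μ*α*t0/m'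
      = α^2 + (α^2*m' + 2*α*μ*t0 + μ^2*d0)/2 - (α*m'+μ*t0)*α := by
    rw [hlamdef, hαddef, hμddef, hαdef, hμdef, hfddef]
    exact scal_a m' d0 t0 t (f t) hm0 hFne (hf t)
  -- matrix structural facts
  have hGaa : G0*(a0ᵀ*a0) = 1 := by rw [hM, hGM]
  have hwa : w0 * a0 = a0 * (G0*(uᵀ*a0)) - u := by
    rw [hw0c]
    simp only [Matrix.sub_mul, Matrix.mul_assoc, hGaa, Matrix.mul_one]
  have hw0T : w0ᵀ = -w0 := by
    rw [hw0c]
    simp only [transpose_sub, transpose_mul, transpose_transpose, hG0T, neg_sub,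
      Matrix.mul_assoc]
  have hOw : w0 * O = O * w0 := exp_smul_comm' w0 _
  have hQP : P0 * Q = Q * P0 := exp_smul_comm' P0 _
  have hOT : Oᵀ = NormedSpace.exp ((s t)•w0) := by
    rw [hOdef, exp_smul_transpose, hw0T]
    congr 1
    rw [smul_neg, neg_smul, neg_neg]
  have hOO : Oᵀ * O = 1 := by rw [hOT, hOdef]; exact exp_smul_inv w0 (s t)
  have hQQi : Q * Qi = 1 := exp_smul_inv P0 (s t)
  have hQiQ : Qi * Q = 1 := by
    have h := exp_smul_inv P0 (-(s t))
    rw [neg_neg] at h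
    exact h
  -- derivatives of the pieces
  have hO' : HasDerivAt (fun τ => NormedSpace.exp ((-(s τ)) • w0)) ((-μ) • (w0 * O)) t := by
    have h := exp_smul_deriv w0 (fun τ => -(s τ)) hs'.neg
    simpa [hOdef, hμdef] using h
  have hQ' : HasDerivAt (fun τ => NormedSpace.exp ((s τ) • P0)) (μ • (P0 * Q)) t :=
    exp_smul_deriv P0 s hs'
  have hcd' : HasDerivAt (fun τ => f τ ^ ((1:ℝ)/m'))
      ((1/m') * f t ^ ((1:ℝ)/m' - 1) * fd) t := by
    have h := hfd.rpow_const (p := (1:ℝ)/m') (Or.inl hFne)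
    convert h using 1
    ring
  -- derivative of A
  have hA1 : HasDerivAt A (c • ((((-μ) • (w0 * O)) * a0
        + O * (0 : Matrix (Fin n) (Fin m) ℝ)) * Q + (O * a0) * (μ • (P0 * Q)))
      + ((1/m') * f t ^ ((1:ℝ)/m' - 1) * fd) • (O * a0 * Q)) t := by
    rw [funext hA]
    exact hcd'.smul ((hO'.matMul (hasDerivAt_const t a0)).matMul hQ')
  have hVt : V t = c • (O * Z * Q) := by
    rw [hV t, hZdef, hαdef, hμdef, hcdef, hOdef, hQdef]
  have hDV : (c • ((((-μ) • (w0 * O)) * a0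
        + O * (0 : Matrix (Fin n) (Fin m) ℝ)) * Q + (O * a0) * (μ • (P0 * Q)))
      + ((1/m') * f t ^ ((1:ℝ)/m' - 1) * fd) • (O * a0 * Q)) = V t := by
    rw [hVt, hsc1, hZdef]
    simp only [Matrix.mul_zero, add_zero, Matrix.smul_mul, Matrix.mul_smul, smul_smul,
      Matrix.mul_assoc, hOw, Matrix.mul_add, Matrix.add_mul, smul_add, Matrix.mul_sub,
      Matrix.sub_mul, smul_sub, Matrix.zero_mul, zero_add]
    have hwa' : ∀ X : Matrix (Fin m) (Fin m) ℝ, w0 * (a0 * X) = (a0 * (G0*(uᵀ*a0)) - u) * X :=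
      fun X => by rw [← Matrix.mul_assoc, hwa]
    simp only [hwa', hP0c, Matrix.mul_zero, add_zero, Matrix.smul_mul, Matrix.mul_smul,
      smul_smul, Matrix.mul_assoc, Matrix.mul_add, Matrix.add_mul, smul_add,
      Matrix.mul_sub, Matrix.sub_mul, smul_sub, Matrix.mul_one, Matrix.one_mul]
    simp only [hμdef, hαdef, hαddef, hμddef, hlamdef, hfddef, hcdef]
    match_scalars <;> ring
  have part1 : HasDerivAt A (V t) t := hDV ▸ hA1
  -- derivative of V
  have hμ' : HasDerivAt (fun τ => (f τ)⁻¹) μd t := hfd.inv hFne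
  have hα' : HasDerivAt (fun τ => d0/2*τ*(f τ)⁻¹) αd t := by
    have h1 : HasDerivAt (fun τ : ℝ => d0/2*τ) (d0/2) t := by
      simpa using (hasDerivAt_id t).const_mul (d0/2)
    exact h1.mul hμ'
  have hZ' : HasDerivAt (fun τ => (d0/2*τ*(f τ)⁻¹) • a0 + (f τ)⁻¹ • u) Zd t :=
    (hα'.smul_const a0).add (hμ'.smul_const u)
  have hV1 : HasDerivAt V (c • ((((-μ) • (w0 * O)) * Z + O * Zd) * Q
        + (O * Z) * (μ • (P0 * Q)))
      + ((1/m') * f t ^ ((1:ℝ)/m' - 1) * fd) • (O * Z * Q)) t := by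
    rw [funext hV]
    exact hcd'.smul ((hO'.matMul hZ').matMul hQ')
  have hstar := star_identity a0 u M G0 P0 w0 hM hGM t0 d0 m' ht0a ht0b hd0tr hP0c hw0c
    α μ lam αd μd hmtr husc hasc Z Zd hZdef hZddef
  have hgeo := geo_reduce a0 Z (lam•Z + Zd + μ•(Z*P0 - w0*Z)) O Q Qi M G0 c hcne
    hM hGM hMG hOO hQQi hQiQ hstar
  have hAt : A t = c • (O * a0 * Q) := by rw [hA t, hcdef, hOdef, hQdef]
  have hW : (c • ((((-μ) • (w0 * O)) * Z + O * Zd) * Q + (O * Z) * (μ • (P0 * Q)))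
      + ((1/m') * f t ^ ((1:ℝ)/m' - 1) * fd) • (O * Z * Q))
      = c • (O * (lam•Z + Zd + μ•(Z*P0 - w0*Z)) * Q) := by
    rw [hcdl]
    simp only [Matrix.smul_mul, Matrix.mul_smul, smul_smul, Matrix.mul_assoc, hOw,
      Matrix.mul_add, Matrix.add_mul, smul_add, Matrix.mul_sub, Matrix.sub_mul, smul_sub]
    simp only [hμdef, hαdef, hαddef, hμddef, hlamdef, hfddef, hcdef]
    match_scalars <;> ring
  have part2 : HasDerivAt V (geoRHS (A t) (V t)) t := by
    rw [hAt, hVt, hgeo, ← hW]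
    exact hV1
  exact ⟨part1, part2⟩

/- ### Main theorem -/

set_option maxHeartbeats 1000000 in
/-- the explicit formula
`a(t) = f(t)^{1/m} exp(-s(t) ω₀) a₀ exp(s(t) P₀)` solves the geodesic
equation with `a(0) = a₀`, `a'(0) = u`, on the interval where `f > 0`. -/
theorem stmt_10 {n m : ℕ} (hmn : m ≤ n) (hm : 0 < m)
    (a0 u : Matrix (Fin n) (Fin m) ℝ) (ha0 : a0.rank = m)
    (L0 : Matrix (Fin n) (Fin n) ℝ) (hL0 : L0 = u * aplus a0)
    (d0 t0 : ℝ) (hd0 : d0 = Matrix.trace (L0ᵀ * L0)) (ht0 : t0 = Matrix.trace L0)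
    (f : ℝ → ℝ) (hf : ∀ t, f t = ((m : ℝ) * d0 / 4) * t ^ 2 + t0 * t + 1)
    (s : ℝ → ℝ) (hs : ∀ t, s t = ∫ σ in (0:ℝ)..t, (f σ)⁻¹)
    (w0 : Matrix (Fin n) (Fin n) ℝ) (hw0 : w0 = L0ᵀ - L0)
    (P0 : Matrix (Fin m) (Fin m) ℝ)
    (hP0 : P0 = (a0ᵀ * a0)⁻¹ * uᵀ * a0 - (t0 / (m : ℝ)) • (1 : Matrix (Fin m) (Fin m) ℝ))
    (A : ℝ → Matrix (Fin n) (Fin m) ℝ)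
    (hA : ∀ t, A t = (f t ^ ((1 : ℝ) / (m : ℝ))) •
      (NormedSpace.exp ((-(s t)) • w0) * a0 * NormedSpace.exp ((s t) • P0))) :
    A 0 = a0 ∧ HasDerivAt A u 0 ∧
      ∀ t, (∀ σ ∈ Set.uIcc (0 : ℝ) t, 0 < f σ) →
        HasDerivAt (deriv A) (geoRHS (A t) (deriv A t)) t := by
  have hm' : (0:ℝ) < (m:ℝ) := by exact_mod_cast hm
  have hm0 : (m:ℝ) ≠ 0 := hm'.ne'
  -- invertibility of M := a0ᵀ * a0
  have hrank : (a0ᵀ * a0).rank = m := by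
    rw [Matrix.rank_transpose_mul_self]; exact ha0
  have hdet : IsUnit (a0ᵀ * a0).det := sq_rank_isUnit _ hrank
  have hGM : (a0ᵀ * a0)⁻¹ * (a0ᵀ * a0) = 1 := Matrix.nonsing_inv_mul _ hdet
  have hMG : (a0ᵀ * a0) * (a0ᵀ * a0)⁻¹ = 1 := Matrix.mul_nonsing_inv _ hdet
  have hMT : (a0ᵀ * a0)ᵀ = a0ᵀ * a0 := by rw [transpose_mul, transpose_transpose]
  have hG0T : ((a0ᵀ * a0)⁻¹)ᵀ = (a0ᵀ * a0)⁻¹ := by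
    rw [Matrix.transpose_nonsing_inv, hMT]
  have hGaa : ∀ X : Matrix (Fin m) (Fin n) ℝ,
      (a0ᵀ * a0)⁻¹ * (a0ᵀ * (a0 * X)) = X := fun X => by
    rw [← Matrix.mul_assoc, ← Matrix.mul_assoc, Matrix.mul_assoc (a0ᵀ*a0)⁻¹ a0ᵀ a0, hGM,
      Matrix.one_mul]
  -- trace identities
  have ht0b : Matrix.trace ((a0ᵀ * a0)⁻¹ * (a0ᵀ * u)) = t0 := by
    calc Matrix.trace ((a0ᵀ * a0)⁻¹ * (a0ᵀ * u))
        = Matrix.trace (((a0ᵀ * a0)⁻¹ * a0ᵀ) * u) := by rw [Matrix.mul_assoc]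
      _ = Matrix.trace (u * ((a0ᵀ * a0)⁻¹ * a0ᵀ)) := Matrix.trace_mul_comm _ _
      _ = t0 := by rw [ht0, hL0, aplus]
  have ht0a : Matrix.trace ((a0ᵀ * a0)⁻¹ * (uᵀ * a0)) = t0 := by
    calc Matrix.trace ((a0ᵀ * a0)⁻¹ * (uᵀ * a0))
        = Matrix.trace (((a0ᵀ * a0)⁻¹ * (uᵀ * a0))ᵀ) := (Matrix.trace_transpose _).symm
      _ = Matrix.trace ((a0ᵀ * u) * (a0ᵀ * a0)⁻¹) := by
          rw [transpose_mul, transpose_mul, transpose_transpose, hG0T]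
      _ = Matrix.trace ((a0ᵀ * a0)⁻¹ * (a0ᵀ * u)) := Matrix.trace_mul_comm _ _
      _ = t0 := ht0b
  have hd0tr : Matrix.trace ((a0ᵀ * a0)⁻¹ * (uᵀ * u)) = d0 := by
    calc Matrix.trace ((a0ᵀ * a0)⁻¹ * (uᵀ * u))
        = Matrix.trace (((a0ᵀ * a0)⁻¹ * uᵀ) * u) := by rw [Matrix.mul_assoc]
      _ = Matrix.trace (u * ((a0ᵀ * a0)⁻¹ * uᵀ)) := Matrix.trace_mul_comm _ _
      _ = Matrix.trace ((u * ((a0ᵀ * a0)⁻¹ * a0ᵀ)) * ((a0 * (a0ᵀ * a0)⁻¹) * uᵀ)) := by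
          simp only [Matrix.mul_assoc, hGaa]
      _ = Matrix.trace ((u * ((a0ᵀ * a0)⁻¹ * a0ᵀ)) * (u * ((a0ᵀ * a0)⁻¹ * a0ᵀ))ᵀ) := by
          rw [transpose_mul, transpose_mul, transpose_transpose, hG0T]
      _ = Matrix.trace ((u * ((a0ᵀ * a0)⁻¹ * a0ᵀ))ᵀ * (u * ((a0ᵀ * a0)⁻¹ * a0ᵀ))) :=
          Matrix.trace_mul_comm _ _
      _ = d0 := by rw [hd0, hL0, aplus]
  have hmtr : Matrix.trace (1 : Matrix (Fin m) (Fin m) ℝ) = (m:ℝ) := by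
    rw [Matrix.trace_one]; simp
  have hw0c : w0 = a0 * (a0ᵀ * a0)⁻¹ * uᵀ - u * (a0ᵀ * a0)⁻¹ * a0ᵀ := by
    rw [hw0, hL0, aplus]
    simp only [transpose_mul, transpose_transpose, hG0T, Matrix.mul_assoc]
  have hfb : ∀ τ, f τ = (m:ℝ)*d0/4*τ^2 + t0*τ + 1 := fun τ => by rw [hf τ]
  have hfc : Continuous f := by rw [funext hf]; continuity
  -- the velocity field
  set Vf : ℝ → Matrix (Fin n) (Fin m) ℝ := fun τ => (f τ ^ ((1:ℝ)/(m:ℝ))) •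
      (NormedSpace.exp ((-(s τ)) • w0) *
        ((d0/2*τ*(f τ)⁻¹) • a0 + (f τ)⁻¹ • u) * NormedSpace.exp ((s τ) • P0))
    with hVfdef
  have hVf : ∀ τ, Vf τ = (f τ ^ ((1:ℝ)/(m:ℝ))) •
      (NormedSpace.exp ((-(s τ)) • w0) *
        ((d0/2*τ*(f τ)⁻¹) • a0 + (f τ)⁻¹ • u) * NormedSpace.exp ((s τ) • P0)) :=
    fun τ => rfl
  have key : ∀ τ, (∀ σ ∈ Set.uIcc (0:ℝ) τ, 0 < f σ) →
      HasDerivAt A (Vf τ) τ ∧ HasDerivAt Vf (geoRHS (A τ) (Vf τ)) τ :=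
    fun τ h => aux_main a0 u (a0ᵀ*a0) ((a0ᵀ*a0)⁻¹) P0 w0 (m:ℝ) d0 t0 hm'
      rfl hGM hMG hG0T ht0a ht0b hd0tr hmtr hP0 hw0c f s hfb hs A Vf hA hVf τ h
  -- part 1
  have hf0 : f 0 = 1 := by rw [hf 0]; ring
  have hs0 : s 0 = 0 := by rw [hs 0]; exact intervalIntegral.integral_same
  have part1 : A 0 = a0 := by
    rw [hA 0, hs0, hf0]
    simp [Real.one_rpow, NormedSpace.exp_zero]
  -- part 2
  have hpos0 : ∀ σ ∈ Set.uIcc (0:ℝ) 0, 0 < f σ := by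
    intro σ hσ
    rw [Set.uIcc_self, Set.mem_singleton_iff] at hσ
    rw [hσ, hf0]; norm_num
  have hVf0 : Vf 0 = u := by
    rw [hVf 0, hs0, hf0]
    simp [Real.one_rpow, NormedSpace.exp_zero]
  have part2 : HasDerivAt A u 0 := hVf0 ▸ (key 0 hpos0).1
  refine ⟨part1, part2, ?_⟩
  -- part 3
  intro t ht
  obtain ⟨δ, hδ, hball⟩ := pos_nbhd f hfc t ht
  have hev : deriv A =ᶠ[nhds t] Vf := by
    filter_upwards [Metric.ball_mem_nhds t hδ] with τ hτ
    exact ((key τ (hball τ hτ)).1).deriv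
  have hdt : deriv A t = Vf t :=
    ((key t (hball t (Metric.mem_ball_self hδ))).1).deriv
  rw [hdt]
  exact (Filter.EventuallyEq.hasDerivAt_iff hev).mpr ((key t ht).2)
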